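/- arXiv:2601.17509 — 2 statements merged into one kernel-verified Lean document; each statement's English description precedes it below -/
import Mathlib

section
/- Let a ≠ 0, r, θ, Λ, M ∈ ℝ with Λ > −3/a², r·M ≥ 0, and Σ = r² + a² cos²θ > 0. Then F := (a²+r²)² (1 + Λa²cos²θ/3) − a² sin²θ · (−(Λ/3) r²(r²+a²) + r² − 2Mr + a²) > 0. -/
theorem F_pos (a r θ Λ M : ℝ) (ha : a ≠ 0) (hΛ : Λ > -3 / a ^ 2)
    (hrM : r * M ≥ 0) (hSigma : r ^ 2 + a ^ 2 * Real.cos θ ^ 2 > 0) :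
    (a ^ 2 + r ^ 2) ^ 2 * (1 + Λ * a ^ 2 * Real.cos θ ^ 2 / 3)
      - a ^ 2 * Real.sin θ ^ 2
          * (-(Λ / 3) * r ^ 2 * (r ^ 2 + a ^ 2) + r ^ 2 - 2 * M * r + a ^ 2)
      > 0 := by
  have ha2 : a ^ 2 > 0 := by positivity
  have h3 : -3 < Λ * a ^ 2 := by
    have := (div_lt_iff₀ ha2).mp hΛ; linarith
  have hΞ : 1 + Λ * a ^ 2 / 3 > 0 := by linarith
  have hsin : Real.sin θ ^ 2 = 1 - Real.cos θ ^ 2 := by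
    have := Real.sin_sq_add_cos_sq θ; linarith
  rw [hsin]
  have hc1 : Real.cos θ ^ 2 ≤ 1 := Real.cos_sq_le_one θ
  have har : a ^ 2 + r ^ 2 > 0 := by positivity
  nlinarith [mul_pos (mul_pos har hSigma) hΞ,
    mul_nonneg (mul_nonneg ha2.le hrM) (by nlinarith : (0:ℝ) ≤ 1 - Real.cos θ ^ 2)]
end

section
/- Fix a ≠ 0 and Λ₀ > −3/a², set Ξ = 1 + Λ₀a²/3, and let M : ℝ → ℝ be continuous with M(r)/r → 0 as r → 0. Define, for r ≠ 0 or cosθ ≠ 0: N(r,θ) = −Ξ² [ (a²+r²)(r²+a²cos²θ)Ξ + 2a²rM(r)sin²θ ] / [ (1 + Λ₀a²cos²θ/3) · (−(Λ₀/3)r²(r²+a²) + r² − 2M(r)r + a²) · (r²+a²cos²θ) ]. Then N(r,θ) → −Ξ³ as (r,θ) → (0, π/2) along any path with r > 0. -/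
open Filter Topology

theorem gtt_ring_limit (a Λ₀ : ℝ) (ha : a ≠ 0) (hΛ₀ : Λ₀ > -3 / a ^ 2)
    (M : ℝ → ℝ) (hMcont : Continuous M)
    (hM : Tendsto (fun r : ℝ => M r / r) (𝓝[≠] 0) (𝓝 0)) :
    Tendsto
      (fun p : ℝ × ℝ =>
        -(1 + Λ₀ * a ^ 2 / 3) ^ 2 *
            ((a ^ 2 + p.1 ^ 2) * (p.1 ^ 2 + a ^ 2 * Real.cos p.2 ^ 2)
                * (1 + Λ₀ * a ^ 2 / 3)
              + 2 * a ^ 2 * p.1 * M p.1 * Real.sin p.2 ^ 2)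
          / ((1 + Λ₀ * a ^ 2 * Real.cos p.2 ^ 2 / 3)
              * (-(Λ₀ / 3) * p.1 ^ 2 * (p.1 ^ 2 + a ^ 2) + p.1 ^ 2
                  - 2 * M p.1 * p.1 + a ^ 2)
              * (p.1 ^ 2 + a ^ 2 * Real.cos p.2 ^ 2)))
      (𝓝[{p : ℝ × ℝ | 0 < p.1}] (0, Real.pi / 2))
      (𝓝 (-(1 + Λ₀ * a ^ 2 / 3) ^ 3)) := by
  have ha2 : (a : ℝ) ^ 2 ≠ 0 := pow_ne_zero 2 ha
  set l := 𝓝[{p : ℝ × ℝ | 0 < p.1}] ((0 : ℝ), Real.pi / 2) with hl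
  have hmem : ∀ᶠ p : ℝ × ℝ in l, 0 < p.1 := eventually_mem_nhdsWithin
  have hr : Tendsto (fun p : ℝ × ℝ => p.1) l (𝓝[≠] (0 : ℝ)) := by
    rw [tendsto_nhdsWithin_iff]
    refine ⟨(continuous_fst.tendsto _).mono_left nhdsWithin_le_nhds, ?_⟩
    exact hmem.mono fun p hp => hp.ne'
  have hMr : Tendsto (fun p : ℝ × ℝ => M p.1 / p.1) l (𝓝 0) := hM.comp hr
  set T : ℝ × ℝ → ℝ := fun p =>
    M p.1 / p.1 * (p.1 ^ 2 / (p.1 ^ 2 + a ^ 2 * Real.cos p.2 ^ 2)) with hTdef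
  have hT : Tendsto T l (𝓝 0) := by
    have hg : Tendsto (fun p : ℝ × ℝ => |M p.1 / p.1|) l (𝓝 0) := by simpa using hMr.abs
    refine squeeze_zero_norm' ?_ hg
    · filter_upwards [hmem] with p hp
      have hρ : (0 : ℝ) < p.1 ^ 2 + a ^ 2 * Real.cos p.2 ^ 2 :=
        add_pos_of_pos_of_nonneg (pow_pos hp 2) (by positivity)
      have hle : p.1 ^ 2 / (p.1 ^ 2 + a ^ 2 * Real.cos p.2 ^ 2) ≤ 1 :=
        div_le_one_of_le₀ (le_add_of_nonneg_right (by positivity)) hρ.le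
      have h0 : (0 : ℝ) ≤ p.1 ^ 2 / (p.1 ^ 2 + a ^ 2 * Real.cos p.2 ^ 2) := by positivity
      rw [hTdef, Real.norm_eq_abs, abs_mul, abs_of_nonneg h0]
      exact mul_le_of_le_one_right (abs_nonneg _) hle
  -- continuous pieces
  have hD : Tendsto (fun p : ℝ × ℝ =>
      (1 + Λ₀ * a ^ 2 * Real.cos p.2 ^ 2 / 3) *
        (-(Λ₀ / 3) * p.1 ^ 2 * (p.1 ^ 2 + a ^ 2) + p.1 ^ 2 - 2 * M p.1 * p.1 + a ^ 2))
      l (𝓝 (a ^ 2)) := by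
    have hc : Continuous fun p : ℝ × ℝ =>
        (1 + Λ₀ * a ^ 2 * Real.cos p.2 ^ 2 / 3) *
          (-(Λ₀ / 3) * p.1 ^ 2 * (p.1 ^ 2 + a ^ 2) + p.1 ^ 2 - 2 * M p.1 * p.1 + a ^ 2) := by
      fun_prop
    have := (hc.tendsto ((0 : ℝ), Real.pi / 2)).mono_left (nhdsWithin_le_nhds (s := {p : ℝ × ℝ | 0 < p.1}))
    simpa [Real.cos_pi_div_two] using this
  have hA : Tendsto (fun p : ℝ × ℝ => (a ^ 2 + p.1 ^ 2) * (1 + Λ₀ * a ^ 2 / 3)) l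
      (𝓝 (a ^ 2 * (1 + Λ₀ * a ^ 2 / 3))) := by
    have hc : Continuous fun p : ℝ × ℝ => (a ^ 2 + p.1 ^ 2) * (1 + Λ₀ * a ^ 2 / 3) := by
      fun_prop
    have := (hc.tendsto ((0 : ℝ), Real.pi / 2)).mono_left (nhdsWithin_le_nhds (s := {p : ℝ × ℝ | 0 < p.1}))
    simpa using this
  have hsin : Tendsto (fun p : ℝ × ℝ => Real.sin p.2 ^ 2) l (𝓝 1) := by
    have hc : Continuous fun p : ℝ × ℝ => Real.sin p.2 ^ 2 := by fun_prop
    have := (hc.tendsto ((0 : ℝ), Real.pi / 2)).mono_left (nhdsWithin_le_nhds (s := {p : ℝ × ℝ | 0 < p.1}))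
    simpa [Real.sin_pi_div_two] using this
  -- the simplified function G
  have hG : Tendsto (fun p : ℝ × ℝ =>
      -(1 + Λ₀ * a ^ 2 / 3) ^ 2 *
        ((a ^ 2 + p.1 ^ 2) * (1 + Λ₀ * a ^ 2 / 3)
          + 2 * a ^ 2 * T p * Real.sin p.2 ^ 2) /
        ((1 + Λ₀ * a ^ 2 * Real.cos p.2 ^ 2 / 3) *
          (-(Λ₀ / 3) * p.1 ^ 2 * (p.1 ^ 2 + a ^ 2) + p.1 ^ 2 - 2 * M p.1 * p.1 + a ^ 2)))
      l (𝓝 (-(1 + Λ₀ * a ^ 2 / 3) ^ 3)) := by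
    have hT2 : Tendsto (fun p : ℝ × ℝ => 2 * a ^ 2 * T p * Real.sin p.2 ^ 2) l (𝓝 (2 * a ^ 2 * 0 * 1)) :=
      ((tendsto_const_nhds (x := (2 * a ^ 2 : ℝ)) (f := l)).mul hT).mul hsin
    have h3 := ((tendsto_const_nhds (x := (-(1 + Λ₀ * a ^ 2 / 3) ^ 2 : ℝ)) (f := l)).mul
        (hA.add hT2)).div hD ha2
    convert h3 using 2
    · rfl
    · rw [eq_div_iff ha2]
      ring
  refine hG.congr' ?_
  filter_upwards [hmem] with p hp
  have hr0 : p.1 ≠ 0 := hp.ne'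
  have hρ : (p.1 ^ 2 + a ^ 2 * Real.cos p.2 ^ 2) ≠ 0 :=
    (add_pos_of_pos_of_nonneg (pow_pos hp 2) (by positivity)).ne'
  have e : (a ^ 2 + p.1 ^ 2) * (p.1 ^ 2 + a ^ 2 * Real.cos p.2 ^ 2)
        * (1 + Λ₀ * a ^ 2 / 3) + 2 * a ^ 2 * p.1 * M p.1 * Real.sin p.2 ^ 2
      = (p.1 ^ 2 + a ^ 2 * Real.cos p.2 ^ 2) *
          ((a ^ 2 + p.1 ^ 2) * (1 + Λ₀ * a ^ 2 / 3)
            + 2 * a ^ 2 * T p * Real.sin p.2 ^ 2) := by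
    rw [hTdef]
    field_simp
  rw [eq_comm, e]
  rw [show -(1 + Λ₀ * a ^ 2 / 3) ^ 2 *
      ((p.1 ^ 2 + a ^ 2 * Real.cos p.2 ^ 2) *
        ((a ^ 2 + p.1 ^ 2) * (1 + Λ₀ * a ^ 2 / 3)
          + 2 * a ^ 2 * T p * Real.sin p.2 ^ 2))
      = (-(1 + Λ₀ * a ^ 2 / 3) ^ 2 *
        ((a ^ 2 + p.1 ^ 2) * (1 + Λ₀ * a ^ 2 / 3)
          + 2 * a ^ 2 * T p * Real.sin p.2 ^ 2)) * (p.1 ^ 2 + a ^ 2 * Real.cos p.2 ^ 2)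
      from by ring,
    mul_div_mul_right _ _ hρ]
end
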